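/- arXiv:1510.03741 — 3 statements merged into one kernel-verified Lean document; each statement's English description precedes it below -/
import Mathlib

section
/- For real numbers k1, k2, k3, with H = (k1+k2+k3)/3, R = (k1k2+k1k3+k2k3)/3, and K = k1k2k3, one has HK ≤ (3/2)R^2. -/
theorem stmt_1 (k1 k2 k3 H R K : ℝ)
    (hH : H = (k1 + k2 + k3) / 3)
    (hR : R = (k1 * k2 + k1 * k3 + k2 * k3) / 3)
    (hK : K = k1 * k2 * k3) :
    H * K ≤ 3 / 2 * R ^ 2 := by
  subst hH hR hK
  nlinarith [sq_nonneg (k1*k2 - k1*k3), sq_nonneg (k1*k2 - k2*k3), sq_nonneg (k1*k3 - k2*k3), sq_nonneg (k1*k2 + k1*k3 + k2*k3), sq_nonneg (k1*k2*k3)]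
end

section
/- For real numbers k1, k2, k3 with H = (k1+k2+k3)/3 and R = (k1k2+k1k3+k2k3)/3 and K = k1k2k3, equality HK = (3/2)R^2 holds if and only if at least two of k1, k2, k3 are zero. -/
theorem stmt_2 (k1 k2 k3 H R K : ℝ)
    (hH : H = (k1 + k2 + k3) / 3)
    (hR : R = (k1 * k2 + k1 * k3 + k2 * k3) / 3)
    (hK : K = k1 * k2 * k3) :
    H * K = 3 / 2 * R ^ 2 ↔
      (k1 = 0 ∧ k2 = 0) ∨ (k1 = 0 ∧ k3 = 0) ∨ (k2 = 0 ∧ k3 = 0) := by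
  subst hH hR hK
  constructor
  · intro h
    have e : (k1*k2)^2 + (k1*k3)^2 + (k2*k3)^2 = 0 := by linear_combination -6 * h
    have h12 : k1*k2 = 0 := by nlinarith [sq_nonneg (k1*k2), sq_nonneg (k1*k3), sq_nonneg (k2*k3)]
    have h13 : k1*k3 = 0 := by nlinarith [sq_nonneg (k1*k2), sq_nonneg (k1*k3), sq_nonneg (k2*k3)]
    have h23 : k2*k3 = 0 := by nlinarith [sq_nonneg (k1*k2), sq_nonneg (k1*k3), sq_nonneg (k2*k3)]
    rcases mul_eq_zero.1 h12 with h1 | h2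
    · rcases mul_eq_zero.1 h23 with h2 | h3
      · exact Or.inl ⟨h1, h2⟩
      · exact Or.inr (Or.inl ⟨h1, h3⟩)
    · rcases mul_eq_zero.1 h13 with h1 | h3
      · exact Or.inl ⟨h1, h2⟩
      · exact Or.inr (Or.inr ⟨h2, h3⟩)
  · rintro (⟨h1,h2⟩|⟨h1,h3⟩|⟨h2,h3⟩) <;> subst_vars <;> ring
end

section
/- Let k1, k2, k3 be real numbers with k1k2 + k1k3 + k2k3 = 0, k1 + k2 + k3 > 0, and k1k2k3 < 0. Then for each i, 3H - k_i > 0 where 3H = k1 + k2 + k3; that is, P_1 = 3H·I - diag(k1,k2,k3) is positive definite. -/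
theorem stmt_16 (k1 k2 k3 H : ℝ)
    (hR : k1 * k2 + k1 * k3 + k2 * k3 = 0)
    (hpos : k1 + k2 + k3 > 0)
    (hK : k1 * k2 * k3 < 0)
    (hH : 3 * H = k1 + k2 + k3) :
    (∀ i : Fin 3, 3 * H - ![k1, k2, k3] i > 0) ∧
      ((3 * H) • (1 : Matrix (Fin 3) (Fin 3) ℝ)
        - Matrix.diagonal ![k1, k2, k3]).PosDef := by
  have h1 : 3 * H - k1 > 0 := by nlinarith [sq_nonneg (k2 + k3), sq_nonneg (k2 - k3), sq_nonneg k1]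
  have h2 : 3 * H - k2 > 0 := by nlinarith [sq_nonneg (k1 + k3), sq_nonneg (k1 - k3), sq_nonneg k2]
  have h3 : 3 * H - k3 > 0 := by nlinarith [sq_nonneg (k1 + k2), sq_nonneg (k1 - k2), sq_nonneg k3]
  have hall : ∀ i : Fin 3, 3 * H - ![k1, k2, k3] i > 0 := by
    intro i; fin_cases i <;> simp <;> linarith
  refine ⟨hall, ?_⟩
  have heq : (3 * H) • (1 : Matrix (Fin 3) (Fin 3) ℝ) - Matrix.diagonal ![k1, k2, k3]
      = Matrix.diagonal (fun i => 3 * H - ![k1, k2, k3] i) := by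
    ext i j
    by_cases h : i = j <;>
      simp [Matrix.diagonal_apply, Matrix.one_apply, h, Matrix.sub_apply]
  rw [heq, Matrix.posDef_diagonal_iff]
  exact hall
end
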